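/- With m > 0, I(k), K(k) as above (I^{(1)} < 0, I^{(2)} > 0, K^{(1)} > 0, K^{(2)} > 0, both solving H(k+1) = C_{m,n}(k)H(k)), and τ = ⟨K(0), I(0)^⊥⟩ > 0, the following pointwise bounds hold for all k: K^{(1)}(k) I^{(2)}(k) ≤ τ ∏_{i=0}^{k-1} c_{2,n}(i)/c_{1,n}(i); −K^{(2)}(k) I^{(1)}(k) ≤ τ ∏_{i=0}^{k-1} c_{2,n}(i)/c_{1,n}(i); −I^{(1)}(k+1) K^{(2)}(k) ≤ (τ/c_{1,n}(k)) ∏_{i=0}^{k-1} c_{2,n}(i)/c_{1,n}(i); and I^{(2)}(k) K^{(1)}(k+1) ≤ (τ/c_{1,n}(k)) ∏_{i=0}^{k-1} c_{2,n}(i)/c_{1,n}(i). -/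

import Mathlib

open Matrix Filter Finset

/-- The matrix `C_{m,n}(k)` from the quantum solid torus Dirac operator. -/
noncomputable def Cmat (a c1 c2 : ℕ → ℕ → ℝ) (m : ℤ) (n k : ℕ) :
    Matrix (Fin 2) (Fin 2) ℝ :=
  !![1 / c1 n k, -(m : ℝ) / (a (n + 1) k * c1 n k);
     -(m : ℝ) / (a n (k + 1) * c1 n k),
     c2 n k + (m : ℝ) ^ 2 / (a n (k + 1) * a (n + 1) k * c1 n k)]

/-- `v^⊥ = (v₂, −v₁)`. -/
def perp (v : Fin 2 → ℝ) : Fin 2 → ℝ := ![v 1, -v 0]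

theorem stmt_16 (a c1 c2 : ℕ → ℕ → ℝ)
    (ha : ∀ n k, 0 < a n k)
    (hc1 : ∀ n k, 0 < c1 n k ∧ c1 n k ≤ 1)
    (hc2 : ∀ n k, 0 < c2 n k ∧ c2 n k ≤ 1)
    (m : ℤ) (hm : 0 < m) (n : ℕ)
    (I K : ℕ → Fin 2 → ℝ)
    (hI : ∀ k, I (k + 1) = Cmat a c1 c2 m n k *ᵥ I k)
    (hK : ∀ k, K (k + 1) = Cmat a c1 c2 m n k *ᵥ K k)
    (hI1 : ∀ k, I k 0 < 0) (hI2 : ∀ k, 0 < I k 1)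
    (hK1 : ∀ k, 0 < K k 0) (hK2 : ∀ k, 0 < K k 1)
    (τ : ℝ) (hτdef : τ = K 0 ⬝ᵥ perp (I 0)) (hτ : 0 < τ) :
    ∀ k,
      K k 0 * I k 1 ≤ τ * ∏ i ∈ Finset.range k, c2 n i / c1 n i ∧
      -(K k 1 * I k 0) ≤ τ * ∏ i ∈ Finset.range k, c2 n i / c1 n i ∧
      -I (k + 1) 0 * K k 1 ≤
        (τ / c1 n k) * ∏ i ∈ Finset.range k, c2 n i / c1 n i ∧
      I k 1 * K (k + 1) 0 ≤
        (τ / c1 n k) * ∏ i ∈ Finset.range k, c2 n i / c1 n i := by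

  -- Wronskian identity
  have key : ∀ k, K k 0 * I k 1 - K k 1 * I k 0
      = τ * ∏ i ∈ Finset.range k, c2 n i / c1 n i := by
    intro k
    induction k with
    | zero =>
      simp [hτdef, perp, dotProduct, Fin.sum_univ_two]
      ring
    | succ k ih =>
      have ha1 := (ha (n+1) k).ne'
      have ha2 := (ha n (k+1)).ne'
      have hc := (hc1 n k).1.ne'
      have expand : K (k+1) 0 * I (k+1) 1 - K (k+1) 1 * I (k+1) 0
          = (c2 n k / c1 n k) * (K k 0 * I k 1 - K k 1 * I k 0) := by
        rw [hI, hK]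
        simp [Cmat, mulVec, dotProduct, Fin.sum_univ_two]
        field_simp
        ring
      rw [Finset.prod_range_succ, expand, ih]
      ring
  intro k
  have hprod : 0 < ∏ i ∈ Finset.range k, c2 n i / c1 n i :=
    Finset.prod_pos fun i _ => div_pos (hc2 n i).1 (hc1 n i).1
  have hW := key k
  have hc1k := (hc1 n k).1
  have hak := ha (n+1) k
  have hmpos : (0:ℝ) < (m:ℝ) := by exact_mod_cast hm
  -- component recurrences
  have hIr : I (k+1) 0 = I k 0 / c1 n k - (m:ℝ)/(a (n+1) k * c1 n k) * I k 1 := by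
    rw [hI]
    simp [Cmat, mulVec, dotProduct, Fin.sum_univ_two]
    ring
  have hKr : K (k+1) 0 = K k 0 / c1 n k - (m:ℝ)/(a (n+1) k * c1 n k) * K k 1 := by
    rw [hK]
    simp [Cmat, mulVec, dotProduct, Fin.sum_univ_two]
    ring
  have hI1k := hI1 k
  have hI2k := hI2 k
  have hK1k := hK1 k
  have hK2k := hK2 k
  have hK1k' := hK1 (k+1)
  -- K k 0 - (m/a) K k 1 = c1 * K(k+1) 0 > 0
  have hKpos : 0 < K k 0 - (m:ℝ)/(a (n+1) k) * K k 1 := by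
    have : K k 0 - (m:ℝ)/(a (n+1) k) * K k 1 = c1 n k * K (k+1) 0 := by
      rw [hKr]; field_simp
    rw [this]; positivity
  refine ⟨?_, ?_, ?_, ?_⟩
  · nlinarith [mul_pos hK2k (neg_pos.mpr hI1k)]
  · nlinarith [mul_pos hK1k hI2k]
  · rw [div_mul_eq_mul_div, le_div_iff₀ hc1k, ← hW]
    have h1 : (-I (k+1) 0 * K k 1) * c1 n k
        = (-I k 0) * K k 1 + (m:ℝ)/(a (n+1) k) * I k 1 * K k 1 := by
      rw [hIr]; field_simp; ring
    rw [h1]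
    nlinarith [mul_pos hI2k hKpos]
  · rw [div_mul_eq_mul_div, le_div_iff₀ hc1k, ← hW]
    have h1 : (I k 1 * K (k+1) 0) * c1 n k
        = I k 1 * (K k 0 - (m:ℝ)/(a (n+1) k) * K k 1) := by
      rw [hKr]; field_simp
    rw [h1]
    nlinarith [mul_pos hI2k (mul_pos (div_pos hmpos hak) hK2k),
      mul_pos hK2k (neg_pos.mpr hI1k)]
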